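/- Let T be a finite tree, a ∈ T, and let T'' be a subtree of T rooted at a. Let b be a nonleaf vertex of T'' all of whose children in T'' are leaves of T'', let k be the number of children of b in T'', and let m be the number of children of b in T, with k < m. Then the number N_T(a, T'') of subtrees of T rooted at a and isomorphic to T'' satisfies N_T(a, T'') ≥ C(m, k) ≥ m, where C(m,k) is the binomial coefficient (using 1 ≤ k ≤ m − 1). -/

import Mathlib

open Classical Filter
noncomputable section

namespace PaperTrees

/-! ### Trees -/

section Trees
variable {A : Type*} {B : Type*}

/-- Level `l` of an edge relation: level 0 = elements with no incoming edge (roots),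
level `l+1` = children of level-`l` elements. -/
def Level (E : A → A → Prop) : ℕ → A → Prop
  | 0 => fun a => ∀ x, ¬ E x a
  | (l+1) => fun a => ∃ b, Level E l b ∧ E b a

def IsRoot (E : A → A → Prop) (a : A) : Prop := ∀ x, ¬ E x a

def IsLeaf (E : A → A → Prop) (a : A) : Prop := ∀ x, ¬ E a x

/-- A tree: `E b a` means `b` is the parent of `a`. -/
structure IsTree (E : A → A → Prop) : Prop where
  asymm : ∀ a b, E a b → a ≠ b ∧ ¬ E b a
  root_unique : ∃! r, IsRoot E r
  parent_unique : ∀ a, ¬ IsRoot E a → ∃! b, E b a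
  acyclic : ∀ a, ¬ Relation.TransGen E a a

def HeightLe (E : A → A → Prop) (h : ℕ) : Prop := ∀ l a, Level E l a → l ≤ h

def HasHeight (E : A → A → Prop) (h : ℕ) : Prop := (∃ a, Level E h a) ∧ HeightLe E h

/-- `a` is an ancestor of `b`: there is a directed path from `a` to `b`. -/
def Ancestor (E : A → A → Prop) (a b : A) : Prop := Relation.TransGen E a b

/-- The closure of a set in a tree: the set together with the root and all
ancestors of its members. -/
def treeCl (E : A → A → Prop) (S : Set A) : Set A :=
  {a | a ∈ S ∨ IsRoot E a ∨ ∃ b ∈ S, Ancestor E a b}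

def IsClosedSet (E : A → A → Prop) (S : Set A) : Prop := treeCl E S = S

def Sibling (E : A → A → Prop) (a b : A) : Prop := a ≠ b ∧ ∃ c, E c a ∧ E c b

def childSet (E : A → A → Prop) (a : A) : Set A := {x | E a x}

/-- The relation induced on a subset (induced substructure). -/
def InducedRel (E : A → A → Prop) (S : Set A) : S → S → Prop := fun x y => E x y

/-- Isomorphism of binary relational structures. -/
def RelIso' (E : A → A → Prop) (E' : B → B → Prop) : Prop :=
  ∃ f : A ≃ B, ∀ x y, E x y ↔ E' (f x) (f y)

/-- `S` carries a subtree of `(A,E)` rooted at `a`. -/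
def IsSubtreeRootedAt (E : A → A → Prop) (S : Set A) (a : A) : Prop :=
  (∃ h : a ∈ S, IsRoot (InducedRel E S) ⟨a, h⟩) ∧ IsTree (InducedRel E S)

/-- `NT E E' a`: the number of subtrees of `(A,E)` rooted at `a` and isomorphic to `(B,E')`. -/
def NT (E : A → A → Prop) (E' : B → B → Prop) (a : A) : ℕ :=
  Set.ncard {S : Set A | IsSubtreeRootedAt E S a ∧ RelIso' (InducedRel E S) E'}

end Trees

/-! ### PLA*: syntax and semantics -/

/-- A (finite) σ-structure on domain `A`: a Bool-valued interpretation of every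
relation symbol. -/
abbrev Struc (σ : Type) (ar : σ → ℕ) (A : Type) : Type := ∀ R : σ, (Fin (ar R) → A) → Bool

/-- Formulas of `PLA*(σ)` with variables in `ℕ`.  Connectives are continuous
functions `[0,1]^k → [0,1]`; aggregation functions are functions
`([0,1]^{<ω})^k → [0,1]` invariant under reordering of the entries of each
sequence; an aggregation node binds the (distinct) variables of `ys`. -/
inductive PLA (σ : Type) (ar : σ → ℕ) : Type where
  | const : unitInterval → PLA σ ar
  | eqf : ℕ → ℕ → PLA σ ar
  | rel : (R : σ) → (Fin (ar R) → ℕ) → PLA σ ar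
  | conn : (k : ℕ) → (C : (Fin k → unitInterval) → unitInterval) → Continuous C →
      (Fin k → PLA σ ar) → PLA σ ar
  | agg : (k : ℕ) → (F : (Fin k → List unitInterval) → unitInterval) →
      (∀ p q : Fin k → List unitInterval, (∀ i, List.Perm (p i) (q i)) → F p = F q) →
      (ys : List ℕ) → ys.Nodup → (Fin k → PLA σ ar) → (Fin k → PLA σ ar) → PLA σ ar

/-- Update an assignment on the variables of the list `ys` by the tuple `b`. -/
def updMany {A : Type} (β : ℕ → A) (ys : List ℕ) (b : Fin ys.length → A) : ℕ → A :=
  fun v => if h : v ∈ ys then b ⟨ys.idxOf v, List.idxOf_lt_length_iff.mpr h⟩ else β v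

/-- The value `A(φ(ā)) ∈ [0,1]` of a `PLA*`-formula in a finite structure under an
assignment. -/
def eval {σ : Type} {ar : σ → ℕ} {A : Type} [Fintype A] (S : Struc σ ar A) :
    PLA σ ar → (ℕ → A) → unitInterval
  | .const c, _ => c
  | .eqf u v, β => if β u = β v then 1 else 0
  | .rel R t, β => if S R (fun i => β (t i)) then 1 else 0
  | .conn _ C _ f, β => C fun i => eval S (f i) β
  | .agg k F _ ys _ φs χs, β =>
      let L : List (Fin ys.length → A) := (Finset.univ : Finset (Fin ys.length → A)).toList
      let vals : Fin k → List unitInterval := fun i =>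
        (L.filter fun b => decide (eval S (χs i) (updMany β ys b) = 1)).map
          fun b => eval S (φs i) (updMany β ys b)
      if ∀ i, vals i ≠ [] then F vals else 0

/-- Free variables (aggregation binds the variables of `ys`). -/
def freeVars {σ : Type} {ar : σ → ℕ} : PLA σ ar → Set ℕ
  | .const _ => ∅
  | .eqf u v => {u, v}
  | .rel _ t => Set.range t
  | .conn _ _ _ f => ⋃ i, freeVars (f i)
  | .agg _ _ _ ys _ φs χs =>
      (((⋃ i, freeVars (φs i)) ∪ ⋃ i, freeVars (χs i)) \ {v | v ∈ ys})

/-- The relation symbols occurring in a formula. -/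
def symbols {σ : Type} {ar : σ → ℕ} : PLA σ ar → Set σ
  | .const _ => ∅
  | .eqf _ _ => ∅
  | .rel R _ => {R}
  | .conn _ _ _ f => ⋃ i, symbols (f i)
  | .agg _ _ _ _ _ φs χs => (⋃ i, symbols (φs i)) ∪ ⋃ i, symbols (χs i)

/-- No aggregation function occurs in the formula. -/
def AggFree {σ : Type} {ar : σ → ℕ} : PLA σ ar → Prop
  | .const _ => True
  | .eqf _ _ => True
  | .rel _ _ => True
  | .conn _ _ _ f => ∀ i, AggFree (f i)
  | .agg _ _ _ _ _ _ _ => False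

/-- `AggOK P φ` holds iff every aggregation subformula
`F(φ₁,…,φ_k : z̄ : χ₁,…,χ_k)` of `φ` satisfies `P k F (χ₁,…,χ_k) z̄`. -/
def AggOK {σ : Type} {ar : σ → ℕ}
    (P : ∀ k : ℕ, ((Fin k → List unitInterval) → unitInterval) → (Fin k → PLA σ ar) → List ℕ → Prop) :
    PLA σ ar → Prop
  | .const _ => True
  | .eqf _ _ => True
  | .rel _ _ => True
  | .conn _ _ _ f => ∀ i, AggOK P (f i)
  | .agg k F _ ys _ φs χs => P k F χs ys ∧ (∀ i, AggOK P (φs i)) ∧ ∀ i, AggOK P (χs i)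

section Signature

variable {σ : Type} {ar : σ → ℕ}

/-- `S` interprets the symbol `e` exactly as the binary relation `E0`. -/
def IsExpansionOf (e : σ) (hE : ar e = 2) {A : Type} (E0 : A → A → Prop) (S : Struc σ ar A) : Prop :=
  ∀ t : Fin (ar e) → A, S e t = true ↔ E0 (t (Fin.cast hE.symm 0)) (t (Fin.cast hE.symm 1))

/-- `S` expands some tree of height at most `Δ`. -/
def ExpandsTreeLe (e : σ) (hE : ar e = 2) (Δ : ℕ) {A : Type} (S : Struc σ ar A) : Prop :=
  ∃ E0 : A → A → Prop, IsTree E0 ∧ HeightLe E0 Δ ∧ IsExpansionOf e hE E0 S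

/-- The canonical expansion of a tree interpreting every other relation symbol as empty;
used to express satisfaction of τ-formulas in the tree itself. -/
def tauStruc [DecidableEq σ] (e : σ) (hE : ar e = 2) {A : Type} (E0 : A → A → Prop) :
    Struc σ ar A :=
  fun R t =>
    if h : R = e then
      decide (E0 (t (Fin.cast (show (2:ℕ) = ar R by rw [h, hE]) 0))
        (t (Fin.cast (show (2:ℕ) = ar R by rw [h, hE]) 1)))
    else false

/-! ### Atomic types and closure types -/

/-- Data of a conjunction of σ-literals in `n` variables: the literals asserted
positively and those asserted negatively. -/
structure AtomicTypeData (σ : Type) (ar : σ → ℕ) (n : ℕ) : Type where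
  pos : Set ((R : σ) × (Fin (ar R) → Fin n))
  neg : Set ((R : σ) × (Fin (ar R) → Fin n))

/-- Satisfaction of an atomic type (which includes the inequalities `xᵢ ≠ xⱼ`). -/
def satAtomic {n : ℕ} {A : Type} (S : Struc σ ar A) (φ : AtomicTypeData σ ar n)
    (t : Fin n → A) : Prop :=
  (∀ l ∈ φ.pos, S l.1 (fun i => t (l.2 i)) = true) ∧
  (∀ l ∈ φ.neg, S l.1 (fun i => t (l.2 i)) = false) ∧ Function.Injective t

/-- The `E`-literal on the pair of variables `(i, j)`. -/
def pairTup (e : σ) {n : ℕ} (i j : Fin n) : Fin (ar e) → Fin n :=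
  fun s => if (s : ℕ) = 0 then i else j

/-- An atomic type over σ (with respect to trees of height at most Δ): it decides all
`E`-literals, contains all inequalities (built into `satAtomic`), and is satisfiable in
some expansion of some tree of height at most `Δ`. -/
def IsAtomicType (e : σ) (hE : ar e = 2) (Δ : ℕ) {n : ℕ} (φ : AtomicTypeData σ ar n) : Prop :=
  (∀ i j : Fin n, (⟨e, pairTup e i j⟩ ∈ φ.pos ∨ ⟨e, pairTup e i j⟩ ∈ φ.neg)) ∧
  ∃ (A : Type) (_ : Fintype A) (S : Struc σ ar A) (t : Fin n → A),
    ExpandsTreeLe e hE Δ S ∧ satAtomic S φ t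

/-- A complete atomic type decides every literal. -/
def CompleteAtomic {n : ℕ} (φ : AtomicTypeData σ ar n) : Prop :=
  ∀ (R : σ) (v : Fin (ar R) → Fin n), ⟨R, v⟩ ∈ φ.pos ∨ ⟨R, v⟩ ∈ φ.neg

/-- An atomic type over τ = {E} uses only `E`-literals. -/
def TauAtomic (e : σ) {n : ℕ} (φ : AtomicTypeData σ ar n) : Prop :=
  (∀ l ∈ φ.pos, l.1 = e) ∧ ∀ l ∈ φ.neg, l.1 = e

/-- The tuple of values of an assignment on a list of variables. -/
def xtuple {A : Type} (β : ℕ → A) (xs : List ℕ) : Fin xs.length → A := fun i => β (xs.get i)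

/-- `p` (a 0/1-valued formula with free variables among `xs`) is, on all σ-structures
expanding trees of height at most `Δ`, equivalent to
`∃ w̄ (φ(x̄,w̄) ∧ "x̄w̄ is closed")` where `φ` is an atomic type implying that each `wᵢ`
lies in the closure of `x̄`. -/
def IsClosureTypeData (e : σ) (hE : ar e = 2) (Δ : ℕ) (p : PLA σ ar) (xs : List ℕ)
    (m : ℕ) (φ : AtomicTypeData σ ar (xs.length + m)) : Prop :=
  IsAtomicType e hE Δ φ ∧
  (∀ (A : Type) (_ : Fintype A) (S : Struc σ ar A) (E0 : A → A → Prop),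
     IsTree E0 → HeightLe E0 Δ → IsExpansionOf e hE E0 S →
     ∀ t : Fin (xs.length + m) → A, satAtomic S φ t →
       ∀ i : Fin m, t (Fin.natAdd xs.length i) ∈
         treeCl E0 (Set.range fun j : Fin xs.length => t (Fin.castAdd m j))) ∧
  (∀ (A : Type) (_ : Fintype A) (S : Struc σ ar A) (E0 : A → A → Prop),
     IsTree E0 → HeightLe E0 Δ → IsExpansionOf e hE E0 S →
     ∀ β : ℕ → A,
       (eval S p β = 1 ∨ eval S p β = 0) ∧
       (eval S p β = 1 ↔ ∃ w : Fin m → A,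
          satAtomic S φ (Fin.append (xtuple β xs) w) ∧
          IsClosedSet E0 (Set.range (Fin.append (xtuple β xs) w))))

/-- A closure type over σ, in the (distinct) free variables `xs`. -/
def IsClosureType (e : σ) (hE : ar e = 2) (Δ : ℕ) (p : PLA σ ar) (xs : List ℕ) : Prop :=
  xs.Nodup ∧ freeVars p ⊆ {v | v ∈ xs} ∧
  ∃ (m : ℕ) (φ : AtomicTypeData σ ar (xs.length + m)), IsClosureTypeData e hE Δ p xs m φ

/-- A complete closure type over σ. -/
def IsCompleteClosureType (e : σ) (hE : ar e = 2) (Δ : ℕ) (p : PLA σ ar) (xs : List ℕ) : Prop :=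
  xs.Nodup ∧ freeVars p ⊆ {v | v ∈ xs} ∧
  ∃ (m : ℕ) (φ : AtomicTypeData σ ar (xs.length + m)),
    IsClosureTypeData e hE Δ p xs m φ ∧ CompleteAtomic φ

/-- A closure type over τ = {E}. -/
def IsClosureTypeTau (e : σ) (hE : ar e = 2) (Δ : ℕ) (p : PLA σ ar) (xs : List ℕ) : Prop :=
  xs.Nodup ∧ freeVars p ⊆ {v | v ∈ xs} ∧ symbols p ⊆ {e} ∧
  ∃ (m : ℕ) (φ : AtomicTypeData σ ar (xs.length + m)),
    IsClosureTypeData e hE Δ p xs m φ ∧ TauAtomic e φ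

/-- Semantic implication on finite σ-structures expanding trees of height at most `Δ`. -/
def ImpOnTrees (e : σ) (hE : ar e = 2) (Δ : ℕ) (p q : PLA σ ar) : Prop :=
  ∀ (A : Type) (_ : Fintype A) (S : Struc σ ar A), ExpandsTreeLe e hE Δ S →
    ∀ β : ℕ → A, eval S p β = 1 → eval S q β = 1

/-- `q` is (up to equivalence) the restriction `p↾τ` of the closure type `p` to τ. -/
def IsTauRestriction (e : σ) (hE : ar e = 2) (Δ : ℕ) (p q : PLA σ ar) (xs : List ℕ) : Prop :=
  IsClosureTypeTau e hE Δ q xs ∧ ImpOnTrees e hE Δ p q ∧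
  ∀ q', IsClosureTypeTau e hE Δ q' xs → ImpOnTrees e hE Δ p q' → ImpOnTrees e hE Δ q q'

/-- The ȳ-rank of the closure type `p(x̄,ȳ)` is `r`: on any realization of `p↾τ` in a tree,
`|cl(b̄) ∖ cl(ā)| = r`. -/
def HasRank (e : σ) (hE : ar e = 2) (Δ : ℕ) (p : PLA σ ar) (xs ys : List ℕ) (r : ℕ) : Prop :=
  ∃ q, IsTauRestriction e hE Δ p q (xs ++ ys) ∧
    ∀ (A : Type) (_ : Fintype A) (S : Struc σ ar A) (E0 : A → A → Prop),
      IsTree E0 → HeightLe E0 Δ → IsExpansionOf e hE E0 S →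
      ∀ β : ℕ → A, eval S q β = 1 →
        (treeCl E0 (β '' {v | v ∈ ys}) \ treeCl E0 (β '' {v | v ∈ xs})).ncard = r

/-- Self-contained closure type: it implies that its variables form a closed set. -/
def SelfContained (e : σ) (hE : ar e = 2) (Δ : ℕ) (p : PLA σ ar) (xs : List ℕ) : Prop :=
  ∀ (A : Type) (_ : Fintype A) (S : Struc σ ar A) (E0 : A → A → Prop),
    IsTree E0 → HeightLe E0 Δ → IsExpansionOf e hE E0 S →
    ∀ β : ℕ → A, eval S p β = 1 → IsClosedSet E0 (β '' {v | v ∈ xs})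

/-- `ψ` is (on expansions of trees of height at most `Δ`) a closure-basic formula
`⋀ᵢ (pᵢ(x̄) → cᵢ)` where the `pᵢ` are complete closure types, `cᵢ ∈ [0,1]`, `∧ = min` and
`→` is the Łukasiewicz implication. -/
def IsClosureBasic (e : σ) (hE : ar e = 2) (Δ : ℕ) (ψ : PLA σ ar) (xs : List ℕ) : Prop :=
  ∃ (k : ℕ) (p : Fin (k+1) → PLA σ ar) (c : Fin (k+1) → ℝ),
    (∀ i, IsCompleteClosureType e hE Δ (p i) xs ∧ c i ∈ Set.Icc (0:ℝ) 1) ∧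
    ∀ (A : Type) (_ : Fintype A) (S : Struc σ ar A), ExpandsTreeLe e hE Δ S → ∀ β : ℕ → A,
      (eval S ψ β : ℝ) =
        Finset.univ.inf' Finset.univ_nonempty
          (fun i => min 1 (1 - (eval S (p i) β : ℝ) + c i))

end Signature

end PaperTrees
/-! ### Base sequences of trees -/

namespace PaperTrees

/-- Assumption 6.4 on the base sequence of trees. -/
structure TreeSeqAssumption (V : ℕ → Type) [∀ n, Fintype (V n)]
    (En : ∀ n, V n → V n → Prop) (Δ : ℕ) (g1 g2 g3 g4 : ℕ → ℝ) : Prop where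
  delta_pos : 0 < Δ
  g1_pos : ∀ n, 0 < g1 n
  g2_pos : ∀ n, 0 < g2 n
  g3_pos : ∀ n, 0 < g3 n
  g4_pos : ∀ n, 0 < g4 n
  g1_infty : Filter.Tendsto g1 Filter.atTop Filter.atTop
  g2_infty : Filter.Tendsto g2 Filter.atTop Filter.atTop
  g3_infty : Filter.Tendsto g3 Filter.atTop Filter.atTop
  g4_infty : Filter.Tendsto g4 Filter.atTop Filter.atTop
  g3_log : ∀ α : ℝ, Filter.Tendsto (fun n => g3 n - α * Real.log n) Filter.atTop Filter.atTop
  g1_g3 : Filter.Tendsto (fun n => g1 n - g3 n) Filter.atTop Filter.atTop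
  g2_over_g1 : Filter.Tendsto (fun n => g2 n / g1 n) Filter.atTop (nhds 0)
  g4_poly : ∃ P : Polynomial ℝ, ∀ n, g4 n = P.eval (n : ℝ)
  tree : ∀ n, IsTree (En n)
  height : ∀ n, HasHeight (En n) Δ
  leaves_level : ∀ n, ∀ a : V n, IsLeaf (En n) a → Level (En n) Δ a
  child_lb : ∀ n, ∀ a : V n, ¬ IsLeaf (En n) a → g1 n ≤ (Set.ncard (childSet (En n) a) : ℝ)
  child_ub : ∀ n, ∀ a : V n, ¬ IsLeaf (En n) a → (Set.ncard (childSet (En n) a) : ℝ) ≤ g4 n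
  siblings : ∀ (B : Type) [Fintype B] (E' : B → B → Prop), IsTree E' →
      (∃ h, 1 ≤ h ∧ HasHeight E' h) →
      ∀ᶠ n in Filter.atTop, ∀ a : V n, ¬ IsRoot (En n) a → 0 < NT (En n) E' a →
        g3 n ≤ (Set.ncard {b : V n | Sibling (En n) a b ∧
          (NT (En n) E' a : ℝ) - g2 n < (NT (En n) E' b : ℝ) ∧
          (NT (En n) E' b : ℝ) < (NT (En n) E' a : ℝ) + g2 n} : ℝ)

/-- The Light Assumption on the base sequence of trees. -/
structure TreeSeqLight (V : ℕ → Type) [∀ n, Fintype (V n)]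
    (En : ∀ n, V n → V n → Prop) (Δ : ℕ) (g1 g4 : ℕ → ℝ) : Prop where
  delta_pos : 0 < Δ
  g1_pos : ∀ n, 0 < g1 n
  g4_pos : ∀ n, 0 < g4 n
  g1_infty : Filter.Tendsto g1 Filter.atTop Filter.atTop
  g4_poly : ∃ P : Polynomial ℝ, ∀ n, g4 n = P.eval (n : ℝ)
  tree : ∀ n, IsTree (En n)
  height : ∀ n, HasHeight (En n) Δ
  leaves_level : ∀ n, ∀ a : V n, IsLeaf (En n) a → Level (En n) Δ a
  child_lb : ∀ n, ∀ a : V n, ¬ IsLeaf (En n) a → g1 n ≤ (Set.ncard (childSet (En n) a) : ℝ)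
  child_ub : ∀ n, ∀ a : V n, ¬ IsLeaf (En n) a → (Set.ncard (childSet (En n) a) : ℝ) ≤ g4 n

/-! ### PLA*-networks and the induced probability distributions -/

section Net
variable {σ : Type} {ar : σ → ℕ}

/-- A `PLA*(σ)`-network based on τ = {e}: a DAG on `σ ∖ {e}` together with a formula
`θ R ∈ PLA*(par(R) ∪ {e})` (with free variables among `x₁,…,x_{ar R}`) for every
`R ∈ σ ∖ {e}`. -/
structure PLANet (σ : Type) (ar : σ → ℕ) (e : σ) where
  prec : σ → σ → Prop
  acyclic : ∀ R, ¬ Relation.TransGen prec R R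
  edges_ne : ∀ R R', prec R R' → R ≠ e ∧ R' ≠ e
  θ : σ → PLA σ ar
  symbols_ok : ∀ R, R ≠ e → symbols (θ R) ⊆ {R' | prec R' R} ∪ {e}
  fv_ok : ∀ R, R ≠ e → freeVars (θ R) ⊆ {v | v < ar R}

/-- The assignment sending variable `i < k` to `t i`. -/
def tupAssign {A : Type} (ha : Nonempty A) {k : ℕ} (t : Fin k → A) : ℕ → A :=
  fun v => if h : v < k then t ⟨v, h⟩ else ha.some

/-- The probability which the network `N` assigns to the σ-structure `S` as an expansion of
the tree `(A, E0)`: the product, over all `R ∈ σ ∖ {e}` and all tuples `ā`, of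
`S(θ_R(ā))` if `R(ā)` holds and `1 - S(θ_R(ā))` otherwise.  (Since
`θ_R ∈ PLA*(par(R) ∪ τ)`, its value in `S` coincides with its value in the reduct of `S` to
the symbols of earlier levels of the DAG, so this agrees with the level-by-level
definition of the induced distribution.) -/
def netProb [Fintype σ] [DecidableEq σ] (e : σ) (hE : ar e = 2) (N : PLANet σ ar e)
    {A : Type} [Fintype A] [DecidableEq A] (ha : Nonempty A) (E0 : A → A → Prop)
    (S : Struc σ ar A) : ℝ :=
  if IsExpansionOf e hE E0 S then
    ∏ R : σ, if R = e then 1 else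
      ∏ t : Fin (ar R) → A,
        if S R t then (eval S (N.θ R) (tupAssign ha t) : ℝ)
        else 1 - (eval S (N.θ R) (tupAssign ha t) : ℝ)
  else 0

/-- The probability of a set of σ-structures under the distribution induced by the network. -/
def netPr [Fintype σ] [DecidableEq σ] (e : σ) (hE : ar e = 2) (N : PLANet σ ar e)
    {A : Type} [Fintype A] [DecidableEq A] (ha : Nonempty A) (E0 : A → A → Prop)
    (X : Set (Struc σ ar A)) : ℝ :=
  ∑ S : Struc σ ar A, if S ∈ X then netProb e hE N ha E0 S else 0

variable [Fintype σ] [DecidableEq σ]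
variable (V : ℕ → Type) [∀ n, Fintype (V n)] [∀ n, DecidableEq (V n)]
variable (En : ∀ n, V n → V n → Prop) (hne : ∀ n, Nonempty (V n))

/-- Asymptotic equivalence of two `PLA*(σ)`-formulas with respect to the sequence of
probability distributions induced by the network on the expansions of the trees `T_n`. -/
def AsympEquiv (e : σ) (hE : ar e = 2) (N : PLANet σ ar e) (φ ψ : PLA σ ar) : Prop :=
  ∀ ε : ℝ, 0 < ε →
    Filter.Tendsto (fun n => netPr e hE N (hne n) (En n)
        {S | IsExpansionOf e hE (En n) S ∧
          ∀ β : ℕ → V n, |(eval S φ β : ℝ) - (eval S ψ β : ℝ)| ≤ ε})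
      Filter.atTop (nhds 1)

/-- `(p, ptau, q)` is `(α, ε)`-balanced in `S` (with `ys` the aggregated variables). -/
def BalancedIn {A : Type} [Fintype A] (S : Struc σ ar A) (p ptau q : PLA σ ar)
    (ys : List ℕ) (α ε : ℝ) : Prop :=
  ∀ β : ℕ → A, eval S q β = 1 →
    (α - ε) * (({b : Fin ys.length → A | eval S ptau (updMany β ys b) = 1}).ncard : ℝ) ≤
      (({b : Fin ys.length → A | eval S p (updMany β ys b) = 1 ∧
          eval S ptau (updMany β ys b) = 1}).ncard : ℝ) ∧
    (({b : Fin ys.length → A | eval S p (updMany β ys b) = 1 ∧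
        eval S ptau (updMany β ys b) = 1}).ncard : ℝ) ≤
      (α + ε) * (({b : Fin ys.length → A | eval S ptau (updMany β ys b) = 1}).ncard : ℝ)

/-- `(p, ptau, q)` is `α`-balanced with respect to the network. -/
def Balanced (e : σ) (hE : ar e = 2) (N : PLANet σ ar e) (p ptau q : PLA σ ar)
    (ys : List ℕ) (α : ℝ) : Prop :=
  ∀ ε : ℝ, 0 < ε →
    Filter.Tendsto (fun n => netPr e hE N (hne n) (En n)
        {S | IsExpansionOf e hE (En n) S ∧ BalancedIn S p ptau q ys α ε})
      Filter.atTop (nhds 1)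

/-- `p ∧ q` is cofinally satisfiable: for infinitely many `n` some expansion of `T_n`
satisfies both. -/
def CofinallySat2 (e : σ) (hE : ar e = 2) (p q : PLA σ ar) : Prop :=
  ∃ᶠ n in Filter.atTop, ∃ S : Struc σ ar (V n), IsExpansionOf e hE (En n) S ∧
    ∃ β : ℕ → V n, eval S p β = 1 ∧ eval S q β = 1

/-- The closure type `p(x̄,ȳ)` (with `x̄ = xs`, `ȳ = ys`) is ȳ-positive with respect
to the network: for every complete closure type `q(x̄)` such that `p ∧ q` is cofinally
satisfiable, the triple `(p, p↾τ, q)` is `α`-balanced for some `α > 0`. -/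
def PosType (e : σ) (hE : ar e = 2) (N : PLANet σ ar e) (Δ : ℕ)
    (p : PLA σ ar) (xs ys : List ℕ) : Prop :=
  ∀ q : PLA σ ar, IsCompleteClosureType e hE Δ q xs → CofinallySat2 V En e hE p q →
    ∃ ptau, IsTauRestriction e hE Δ p ptau (xs ++ ys) ∧
      ∃ α : ℝ, 0 < α ∧ Balanced V En hne e hE N p ptau q ys α

end Net

/-! ### Convergence testing, continuous and admissible aggregation functions -/

/-- `p` is a convergence testing sequence for parameters `c j` and `al j` (`j < k`):
lengths strictly increase, entries are nonempty sequences, and for every family of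
pairwise disjoint intervals `Iv j ⊆ [0,1]`, open in the induced topology on `[0,1]`,
with `c j ∈ Iv j`, eventually all entries lie in `⋃ j, Iv j` and the proportion of
entries in `Iv j` tends to `al j`. -/
def CTFor (p : ℕ → List unitInterval) {k : ℕ} (c : Fin k → ℝ) (al : Fin k → ℝ) : Prop :=
  (∀ n, p n ≠ []) ∧ (∀ n, (p n).length < (p (n+1)).length) ∧
  ∀ Iv : Fin k → Set ℝ,
    (∀ j, Iv j ⊆ Set.Icc (0:ℝ) 1) → (∀ j, (Iv j).OrdConnected) →
    (∀ j, ∃ U : Set ℝ, IsOpen U ∧ Iv j = U ∩ Set.Icc (0:ℝ) 1) →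
    (Pairwise fun i j => Disjoint (Iv i) (Iv j)) →
    (∀ j, c j ∈ Iv j) →
    (∀ᶠ n in Filter.atTop, ∀ x ∈ p n, (x : ℝ) ∈ ⋃ j, Iv j) ∧
    ∀ j, Filter.Tendsto
      (fun n => (((p n).filter (fun x => decide ((x:ℝ) ∈ Iv j))).length : ℝ) / ((p n).length : ℝ))
      Filter.atTop (nhds (al j))

/-- Convergence-testing sequences of `m`-tuples. -/
def CTForM {m : ℕ} (p : ℕ → Fin m → List unitInterval) (k : Fin m → ℕ)
    (c : ∀ i, Fin (k i) → ℝ) (al : ∀ i, Fin (k i) → ℝ) : Prop :=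
  ∀ i, CTFor (fun n => p n i) (c i) (al i)

/-- `F` is ct-continuous with respect to the given parameters. -/
def CTContinuousAt {m : ℕ} (F : (Fin m → List unitInterval) → unitInterval)
    (k : Fin m → ℕ) (c : ∀ i, Fin (k i) → ℝ) (al : ∀ i, Fin (k i) → ℝ) : Prop :=
  ∀ p q : ℕ → Fin m → List unitInterval, CTForM p k c al → CTForM q k c al →
    Filter.Tendsto (fun n => |(F (p n) : ℝ) - (F (q n) : ℝ)|) Filter.atTop (nhds 0)

/-- `F` is continuous (strongly admissible): ct-continuous for every choice of parameters. -/
def ContinuousAggM {m : ℕ} (F : (Fin m → List unitInterval) → unitInterval) : Prop :=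
  ∀ (k : Fin m → ℕ) (c al : ∀ i, Fin (k i) → ℝ),
    (∀ i j, c i j ∈ Set.Icc (0:ℝ) 1) → (∀ i j, al i j ∈ Set.Icc (0:ℝ) 1) →
    CTContinuousAt F k c al

/-- `F` is admissible: ct-continuous for every choice of parameters with all `al i j > 0`. -/
def AdmissibleAggM {m : ℕ} (F : (Fin m → List unitInterval) → unitInterval) : Prop :=
  ∀ (k : Fin m → ℕ) (c al : ∀ i, Fin (k i) → ℝ),
    (∀ i j, c i j ∈ Set.Icc (0:ℝ) 1) → (∀ i j, al i j ∈ Set.Icc (0:ℝ) 1) →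
    (∀ i j, 0 < al i j) → CTContinuousAt F k c al

end PaperTrees

namespace PaperTrees

private lemma tg_map {A B : Type*} {E : A → A → Prop} {E' : B → B → Prop} (f : A ≃ B)
    (hf : ∀ x y, E x y ↔ E' (f x) (f y)) {x y : A} (h : Relation.TransGen E x y) :
    Relation.TransGen E' (f x) (f y) := by
  induction h with
  | single h => exact Relation.TransGen.single ((hf _ _).mp h)
  | tail _ h ih => exact ih.tail ((hf _ _).mp h)

private lemma isRoot_iff {A B : Type*} {E : A → A → Prop} {E' : B → B → Prop} (f : A ≃ B)
    (hf : ∀ x y, E x y ↔ E' (f x) (f y)) (x : A) : IsRoot E x ↔ IsRoot E' (f x) := by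
  constructor
  · intro h w hw
    exact h (f.symm w) ((hf _ _).mpr (by simpa using hw))
  · intro h w hw
    exact h (f w) ((hf _ _).mp hw)

private lemma isTree_of_iso {A B : Type*} {E : A → A → Prop} {E' : B → B → Prop} (f : A ≃ B)
    (hf : ∀ x y, E x y ↔ E' (f x) (f y)) (hT : IsTree E') : IsTree E := by
  constructor
  · intro a b h
    obtain ⟨h1, h2⟩ := hT.asymm _ _ ((hf a b).mp h)
    exact ⟨fun e => h1 (by rw [e]), fun e => h2 ((hf b a).mp e)⟩
  · obtain ⟨r, hr, hu⟩ := hT.root_unique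
    refine ⟨f.symm r, ?_, ?_⟩
    · show IsRoot E (f.symm r)
      rw [isRoot_iff f hf]; simpa using hr
    · intro x hx
      have h2 := hu (f x) ((isRoot_iff f hf x).mp hx)
      rw [← h2]; simp
  · intro x hx
    have hnr : ¬ IsRoot E' (f x) := fun h => hx ((isRoot_iff f hf x).mpr h)
    obtain ⟨p, hp, hu⟩ := hT.parent_unique _ hnr
    refine ⟨f.symm p, (hf _ _).mpr (by simpa using hp), ?_⟩
    intro y hy
    have h2 := hu (f y) ((hf _ _).mp hy)
    rw [← h2]; simp
  · intro x hx
    exact hT.acyclic (f x) (tg_map f hf hx)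

private lemma root_reaches {A : Type*} [Finite A] {E : A → A → Prop} (hT : IsTree E)
    {r : A} (hr : IsRoot E r) : ∀ z, z ≠ r → Relation.TransGen E r z := by
  haveI : IsTrans A (Relation.TransGen E) := inferInstance
  haveI : IsIrrefl A (Relation.TransGen E) := ⟨hT.acyclic⟩
  have hwf : WellFounded E :=
    Subrelation.wf (fun h => Relation.TransGen.single h)
      (Finite.wellFounded_of_trans_of_irrefl _)
  intro z
  induction z using hwf.induction with
  | _ z ih =>
    intro hz
    have hnr : ¬ IsRoot E z := by
      intro h
      obtain ⟨r0, _, hu⟩ := hT.root_unique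
      exact hz ((hu z h).trans (hu r hr).symm)
    obtain ⟨p, hp, -⟩ := hT.parent_unique z hnr
    rcases eq_or_ne p r with rfl | hpr
    · exact Relation.TransGen.single hp
    · exact (ih p hp hpr).tail hp

private lemma le_choose : ∀ m k : ℕ, 1 ≤ k → k < m → m ≤ m.choose k := by
  intro m
  induction m with
  | zero => intro k h1 h2; omega
  | succ n ih =>
    intro k h1 h2
    obtain ⟨j, rfl⟩ : ∃ j, k = j + 1 := ⟨k - 1, by omega⟩
    rcases Nat.lt_or_ge (j + 1) n with hlt | hge
    · rcases Nat.eq_zero_or_pos j with rfl | hj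
      · simp [Nat.choose_one_right]
      · rw [Nat.choose_succ_succ]
        have hb : 1 ≤ n.choose j := Nat.choose_pos (by omega)
        have := ih (j + 1) (by omega) hlt
        have h2 : n.choose j.succ = n.choose (j + 1) := rfl
        omega
    · have : j + 1 = n := by omega
      subst this
      simp [Nat.choose_succ_self_right]


/-- The combinatorial estimate from Remark 5.2 (ii): if `T''` (carried by the subset `S₀`)
is a subtree of the finite tree `T = (A, E)` rooted at `a`, `b` is a nonleaf of `T''` all
of whose children in `T''` are leaves of `T''`, `k` is the number of children of `b` in
`T''` and `m` the number of children of `b` in `T`, with `1 ≤ k < m`, then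
`N_T(a, T'') ≥ C(m,k) ≥ m`. -/
theorem statement_16
    {A : Type} [Fintype A] (E : A → A → Prop) (hT : IsTree E)
    (a : A) (S0 : Set A) (hS : IsSubtreeRootedAt E S0 a)
    (b : A) (hb : b ∈ S0)
    (hnonleaf : ∃ x ∈ S0, E b x)
    (hchildleaves : ∀ x ∈ S0, E b x → ∀ y ∈ S0, ¬ E x y)
    (k m : ℕ)
    (hk : k = Set.ncard {x | x ∈ S0 ∧ E b x})
    (hm : m = Set.ncard {x | E b x})
    (hk1 : 1 ≤ k) (hkm : k < m) :
    m.choose k ≤ NT E (InducedRel E S0) a ∧ m ≤ m.choose k := by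
  classical
  set C : Set A := {x | x ∈ S0 ∧ E b x} with hCdef
  have hCS0 : C ⊆ S0 := fun x hx => hx.1
  obtain ⟨ha0, haroot⟩ := hS.1
  have htree0 : IsTree (InducedRel E S0) := hS.2
  -- uniqueness of parents in T
  have huniqT : ∀ {x y c : A}, E x c → E y c → x = y := by
    intro x y c hx hy
    have hnr : ¬ IsRoot E c := fun h => h x hx
    obtain ⟨p, -, hu⟩ := hT.parent_unique c hnr
    rw [hu x hx, hu y hy]
  -- every element of S0 is reachable from a within T
  have hreach : ∀ z ∈ S0, z ≠ a → Relation.TransGen E a z := by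
    intro z hz hza
    have h1 : (⟨z, hz⟩ : S0) ≠ ⟨a, ha0⟩ := by simpa using hza
    have h0 := root_reaches htree0 haroot ⟨z, hz⟩ h1
    have h2 : ∀ (x y : S0), Relation.TransGen (InducedRel E S0) x y →
        Relation.TransGen E ↑x ↑y := by
      intro x y h
      induction h with
      | single h => exact Relation.TransGen.single h
      | tail _ h ih => exact ih.tail h
    exact h2 _ _ h0
  -- non-root elements of S0 have a parent in S0
  have hparS0 : ∀ z, ∀ hz : z ∈ S0, z ≠ a → ∃ p ∈ S0, E p z := by
    intro z hz hza
    have hnr : ¬ IsRoot (InducedRel E S0) ⟨z, hz⟩ := by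
      intro h
      obtain ⟨r0, -, hu⟩ := htree0.root_unique
      have h3 : (⟨z, hz⟩ : S0) = ⟨a, ha0⟩ := (hu _ h).trans (hu _ haroot).symm
      exact hza (by simpa using h3)
    obtain ⟨p, hp, -⟩ := htree0.parent_unique _ hnr
    exact ⟨↑p, p.2, hp⟩
  -- children of b outside S0 have no children inside S0
  have hFactB : ∀ y, E b y → y ∉ S0 → ∀ z ∈ S0, ¬ E y z := by
    intro y hby hyn z hz hyz
    by_cases hza : z = a
    · subst hza
      by_cases hba : b = z
      · subst hba
        exact hT.acyclic b ((Relation.TransGen.single hby).tail hyz)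
      · exact hT.acyclic z (((hreach b hb hba).tail hby).tail hyz)
    · obtain ⟨p, hpS, hpz⟩ := hparS0 z hz hza
      have hpy : p = y := huniqT hpz hyz
      exact hyn (hpy ▸ hpS)
  have hbC : b ∉ C := fun h => (hT.asymm b b h.2).1 rfl
  have haSC : a ∈ S0 \ C := ⟨ha0, fun h => haroot ⟨b, hb⟩ h.2⟩
  -- counting setup
  have hCTfin : ({x | E b x} : Set A).Finite := Set.toFinite _
  set CTf : Finset A := hCTfin.toFinset with hCTfdef
  have hmcard : CTf.card = m := by
    rw [hm, Set.ncard_eq_toFinset_card _ hCTfin]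
  set P := Finset.powersetCard k CTf with hPdef
  have hPcard : P.card = m.choose k := by
    rw [hPdef, Finset.card_powersetCard, hmcard]
  -- main membership lemma
  have hmem : ∀ Y ∈ P, IsSubtreeRootedAt E (S0 \ C ∪ ↑Y) a ∧
      RelIso' (InducedRel E (S0 \ C ∪ ↑Y)) (InducedRel E S0) := by
    intro Y hYP
    obtain ⟨hYsub, hYcard⟩ := Finset.mem_powersetCard.mp hYP
    have hYch : ∀ y ∈ (↑Y : Set A), E b y := fun y hy =>
      hCTfin.mem_toFinset.mp (hYsub hy)
    have hdisj : Disjoint (S0 \ C) (↑Y : Set A) := by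
      rw [Set.disjoint_left]
      intro x hx hxY
      exact hx.2 ⟨hx.1, hYch x hxY⟩
    have hdisj0 : Disjoint (S0 \ C) C := disjoint_sdiff_self_left
    haveI : Fintype (↑Y : Set A) := Fintype.ofFinite _
    haveI : Fintype C := Fintype.ofFinite _
    have hcardYC : Fintype.card (↑Y : Set A) = Fintype.card C := by
      rw [← Nat.card_eq_fintype_card, ← Nat.card_eq_fintype_card,
        Nat.card_coe_set_eq, Nat.card_coe_set_eq, Set.ncard_coe_finset,
        hYcard, hk]
    let eY : (↑Y : Set A) ≃ C := Fintype.equivOfCardEq hcardYC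
    have hS0eq : (S0 \ C) ∪ C = S0 := Set.diff_union_of_subset hCS0
    let f : ↥(S0 \ C ∪ ↑Y) ≃ ↥S0 :=
      (Equiv.Set.union hdisj).trans
        ((Equiv.sumCongr (Equiv.refl _) eY).trans
          ((Equiv.Set.union hdisj0).symm.trans (Equiv.setCongr hS0eq)))
    have hfid : ∀ (x : ↥(S0 \ C ∪ ↑Y)) (hx : (x : A) ∈ S0 \ C), ((f x : A)) = (x : A) := by
      intro x hx
      have h1 : Equiv.Set.union hdisj x = Sum.inl ⟨↑x, hx⟩ :=
        Equiv.Set.union_apply_left hdisj hx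
      simp only [f, Equiv.trans_apply, Equiv.sumCongr_apply]
      rw [h1]
      simp [Equiv.Set.union_symm_apply_left]
    have hfC : ∀ (x : ↥(S0 \ C ∪ ↑Y)) (hx : (x : A) ∈ (↑Y : Set A)), ((f x : A)) ∈ C := by
      intro x hx
      have h1 : Equiv.Set.union hdisj x = Sum.inr ⟨↑x, hx⟩ :=
        Equiv.Set.union_apply_right hdisj hx
      have h2 : ((f x : A)) = ((eY ⟨↑x, hx⟩ : A)) := by
        simp only [f, Equiv.trans_apply, Equiv.sumCongr_apply]
        rw [h1]
        simp [Equiv.Set.union_symm_apply_right]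
      rw [h2]
      exact (eY ⟨↑x, hx⟩).2
    have hsplit : ∀ x : ↥(S0 \ C ∪ ↑Y), (x : A) ∈ S0 \ C ∨ (x : A) ∈ (↑Y : Set A) := fun x => x.2
    have hiff : ∀ x y : ↥(S0 \ C ∪ ↑Y), InducedRel E (S0 \ C ∪ ↑Y) x y ↔ InducedRel E S0 (f x) (f y) := by
      intro x y
      show E ↑x ↑y ↔ E ↑(f x) ↑(f y)
      rcases hsplit x with hx | hx <;> rcases hsplit y with hy | hy
      · rw [hfid x hx, hfid y hy]
      · rw [hfid x hx]
        have hc := hfC y hy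
        constructor
        · intro h
          have hxb : (x : A) = b := huniqT h (hYch _ hy)
          rw [hxb]; exact hc.2
        · intro h
          have hxb : (x : A) = b := huniqT h hc.2
          rw [hxb]; exact hYch _ hy
      · have hc := hfC x hx
        rw [hfid y hy]
        constructor
        · intro h
          exfalso
          by_cases hxS : (x : A) ∈ S0
          · exact hchildleaves ↑x hxS (hYch _ hx) ↑y hy.1 h
          · exact hFactB ↑x (hYch _ hx) hxS ↑y hy.1 h
        · intro h
          exact absurd h (hchildleaves _ hc.1 hc.2 ↑y hy.1)
      · have hcx := hfC x hx
        have hcy := hfC y hy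
        constructor
        · intro h
          exfalso
          have hxb : (x : A) = b := huniqT h (hYch _ hy)
          have hbb : E b b := by
            have := hYch _ hx
            rwa [hxb] at this
          exact (hT.asymm b b hbb).1 rfl
        · intro h
          exact absurd h (hchildleaves _ hcx.1 hcx.2 _ hcy.1)
    have haY : a ∈ S0 \ C ∪ ↑Y := Or.inl haSC
    refine ⟨⟨⟨haY, ?_⟩, isTree_of_iso f hiff htree0⟩, ⟨f, hiff⟩⟩
    intro x hx
    have h2 := (hiff x ⟨a, haY⟩).mp hx
    have h3 : ((f ⟨a, haY⟩ : A)) = a := hfid ⟨a, haY⟩ haSC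
    exact haroot (f x) (by show E ↑(f x) a; rw [← h3]; exact h2)
  -- injectivity
  have hinj : Set.InjOn (fun Y : Finset A => S0 \ C ∪ ↑Y) ↑P := by
    have key : ∀ Y ∈ P, (S0 \ C ∪ ↑Y) ∩ {x | E b x} = (↑Y : Set A) := by
      intro Y hYP
      obtain ⟨hYsub, -⟩ := Finset.mem_powersetCard.mp hYP
      ext x
      simp only [Set.mem_inter_iff, Set.mem_union, Set.mem_diff,
        Set.mem_setOf_eq, Finset.mem_coe]
      constructor
      · rintro ⟨h1 | h1, h2⟩
        · exact absurd (⟨h1.1, h2⟩ : x ∈ C) h1.2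
        · exact h1
      · intro hx
        exact ⟨Or.inr hx, hCTfin.mem_toFinset.mp (hYsub hx)⟩
    intro Y1 h1 Y2 h2 he
    apply Finset.coe_injective
    rw [← key Y1 (Finset.mem_coe.mp h1), ← key Y2 (Finset.mem_coe.mp h2)]
    simp only at he
    rw [he]
  constructor
  · have himg : (fun Y : Finset A => S0 \ C ∪ ↑Y) '' ↑P ⊆ {S : Set A | IsSubtreeRootedAt E S a ∧
        RelIso' (InducedRel E S) (InducedRel E S0)} := by
      rintro S ⟨Y, hY, rfl⟩
      exact hmem Y (Finset.mem_coe.mp hY)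
    calc m.choose k = P.card := hPcard.symm
      _ = (↑P : Set (Finset A)).ncard := (Set.ncard_coe_finset P).symm
      _ = ((fun Y : Finset A => S0 \ C ∪ ↑Y) '' ↑P).ncard := (Set.ncard_image_of_injOn hinj).symm
      _ ≤ NT E (InducedRel E S0) a := Set.ncard_le_ncard himg (Set.toFinite _)
  · exact le_choose m k hk1 hkm


end PaperTrees
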